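/- A set of species {X_{i_1},…,X_{i_u}} is an LTC species set (for all positive rate constants) if and only if every reactant complex of the network contains at least one of X_{i_1},…,X_{i_u} with positive stoichiometric coefficient. -/

import Mathlib

open Matrix

/-- A set of species I is an LTC species set (for all positive rate constants) if and
only if every reactant complex of the network contains at least one of the species in
I with positive stoichiometric coefficient. The network has no self-edges, so the
stoichiometric matrix N has no zero column. -/
theorem LTC_species_iff_every_reactant_contains {n m : ℕ}
    (N : Matrix (Fin n) (Fin m) ℝ) (B : Matrix (Fin n) (Fin m) ℕ)
    (hN : ∀ r, ∃ i, N i r ≠ 0)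
    (I : Finset (Fin n)) (hI : I.card < n) :
    (∀ κ : Fin m → ℝ, (∀ r, 0 < κ r) → ∀ x : Fin n → ℝ, (∀ s, 0 ≤ x s) →
        (∀ k ∈ I, x k = 0) → ∀ i, ∑ r, N i r * κ r * ∏ s, x s ^ B s r = 0) ↔
    (∀ r, ∃ k ∈ I, 0 < B k r) := by
  constructor
  · intro h r
    by_contra hc
    push_neg at hc
    set x : Fin n → ℝ := fun s => if s ∈ I then 0 else 1 with hx
    obtain ⟨i, hi⟩ := hN r
    have hx0 : ∀ s, 0 ≤ x s := fun s => by
      by_cases hs : s ∈ I <;> simp [hx, hs]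
    have hxI : ∀ k ∈ I, x k = 0 := fun k hk => by simp [hx, hk]
    have hprod : ∏ s, x s ^ B s r = 1 := by
      apply Finset.prod_eq_one
      intro s _
      by_cases hs : s ∈ I
      · have : B s r = 0 := Nat.le_zero.mp (hc s hs)
        simp [this]
      · simp [hx, hs]
    have h1 := h (fun _ => 1) (fun _ => one_pos) x hx0 hxI i
    have h2 := h (fun r' => if r' = r then 2 else 1)
      (fun r' => by split <;> norm_num) x hx0 hxI i
    have key : (∑ r', N i r' * (if r' = r then (2:ℝ) else 1) * ∏ s, x s ^ B s r')
        - (∑ r', N i r' * 1 * ∏ s, x s ^ B s r')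
        = N i r * ∏ s, x s ^ B s r := by
      rw [← Finset.sum_sub_distrib, Finset.sum_eq_single r]
      · simp; ring
      · intro b _ hb; simp [hb]
      · intro hr; exact absurd (Finset.mem_univ r) hr
    rw [h1, h2, sub_zero, hprod, mul_one] at key
    exact hi key.symm
  · intro h κ hκ x hx hxI i
    apply Finset.sum_eq_zero
    intro r _
    obtain ⟨k, hk, hB⟩ := h r
    have hxk : x k ^ B k r = 0 := by
      rw [hxI k hk]; exact zero_pow hB.ne'
    rw [Finset.prod_eq_zero (Finset.mem_univ k) hxk, mul_zero]
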